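/- Let E be a topological graph and Y a closed subset of E^0_rg. Define m_Y^0 : E_Y^0 → E^0 and m_Y^1 : E_Y^1 → E^1 to be the identity on E^0 and E^1 respectively, with m_Y^0(ω(v)) = v for v ∈ Y and m_Y^1(ω(e)) = e for e ∈ d^{-1}(Y). Then m_Y^0 and m_Y^1 are proper continuous surjections, and their continuous extensions to the one-point compactifications (sending ∞ to ∞) form a factor map m_Y = (m_Y^0, m_Y^1) from E_Y to E. -/

import Mathlib

open Set Filter OnePoint

namespace TopGraphAux

/-- `E⁰_sce`: the open set of sources of a topological graph. -/
def graphSce {E0 E1 : Type*} [TopologicalSpace E0] (r : E1 → E0) : Set E0 :=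
  (closure (Set.range r))ᶜ

/-- `E⁰_fin`: vertices having a neighborhood whose `r`-preimage is compact. -/
def graphFin {E0 E1 : Type*} [TopologicalSpace E0] [TopologicalSpace E1] (r : E1 → E0) :
    Set E0 :=
  {v | ∃ V ∈ nhds v, IsCompact (r ⁻¹' V)}

/-- `E⁰_rg`: the open set of regular vertices of a topological graph. -/
def graphRg {E0 E1 : Type*} [TopologicalSpace E0] [TopologicalSpace E1] (r : E1 → E0) :
    Set E0 :=
  graphFin r \ closure (graphSce r)

/-- A factor map from the topological graph `F = (F0, F1, dF, rF)` to the topological graph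
`E = (E0, E1, dE, rE)`: a pair of continuous maps between one-point compactifications sending
`∞` to `∞`, intertwining range and domain maps, and with the unique edge-lifting property. -/
structure IsFactorMap {E0 E1 F0 F1 : Type*}
    [TopologicalSpace E0] [TopologicalSpace E1] [TopologicalSpace F0] [TopologicalSpace F1]
    (dE rE : E1 → E0) (dF rF : F1 → F0)
    (m0 : OnePoint F0 → OnePoint E0) (m1 : OnePoint F1 → OnePoint E1) : Prop where
  continuous_m0 : Continuous m0
  continuous_m1 : Continuous m1
  map_infty0 : m0 ∞ = ∞
  map_infty1 : m1 ∞ = ∞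
  compat : ∀ (e : F1) (e' : E1), m1 ↑e = ↑e' →
    (↑(rE e') : OnePoint E0) = m0 ↑(rF e) ∧ (↑(dE e') : OnePoint E0) = m0 ↑(dF e)
  lift : ∀ (e' : E1) (v : F0), (↑(dE e') : OnePoint E0) = m0 ↑v →
    ∃! e : F1, m1 ↑e = (↑e' : OnePoint E1) ∧ dF e = v

/-- Regularity of a factor map: every vertex mapping to a regular vertex receives an edge,
and all edges it receives are mapped to genuine edges. -/
def IsRegularFactorMap {E0 E1 F0 F1 : Type*}
    [TopologicalSpace E0] [TopologicalSpace E1] [TopologicalSpace F0] [TopologicalSpace F1]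
    (rE : E1 → E0) (rF : F1 → F0)
    (m0 : OnePoint F0 → OnePoint E0) (m1 : OnePoint F1 → OnePoint E1) : Prop :=
  ∀ (v : F0) (w : E0), m0 ↑v = ↑w → w ∈ graphRg rE →
    (∃ e : F1, rF e = v) ∧ ∀ e : F1, rF e = v → ∃ e' : E1, m1 ↑e = ↑e'

/-- `f` restricts to a homeomorphism from `U` onto `V`. -/
def IsHomeoOn {X Y : Type*} [TopologicalSpace X] [TopologicalSpace Y]
    (f : X → Y) (U : Set X) (V : Set Y) : Prop :=
  ∃ h : U ≃ₜ V, ∀ x : U, (h x : Y) = f (x : X)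

/-- Extension of a map `A → OnePoint B` to the one-point compactification, sending `∞` to `∞`. -/
def onePointLift {A B : Type*} (f : A → OnePoint B) : OnePoint A → OnePoint B :=
  fun x => Option.elim x ∞ f

/-- The relation identifying the copy in `S` of each point of `B ⊆ S` with the corresponding
point of `X`. -/
def glueRel {X : Type*} (S B : Set X) : (X ⊕ ↥S) → (X ⊕ ↥S) → Prop :=
  fun a b => ∃ x : ↥S, (x : X) ∈ B ∧
    ((a = Sum.inl ↑x ∧ b = Sum.inr x) ∨ (a = Sum.inr x ∧ b = Sum.inl ↑x))

/-- The space `X ⨿_B S` obtained from `X ⊔ S` by identifying the two copies of each point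
of `B ⊆ S ⊆ X`. -/
def Glue (X : Type*) (S B : Set X) : Type _ := Quot (glueRel S B)

instance {X : Type*} [TopologicalSpace X] (S B : Set X) : TopologicalSpace (Glue X S B) :=
  inferInstanceAs (TopologicalSpace (Quot _))

/-- The canonical inclusion `X → X ⨿_B S`. -/
def Glue.inl {X : Type*} {S B : Set X} (x : X) : Glue X S B := Quot.mk _ (Sum.inl x)

/-- The inclusion of the extra copy `S → X ⨿_B S`. -/
def Glue.inr {X : Type*} {S B : Set X} (x : ↥S) : Glue X S B := Quot.mk _ (Sum.inr x)

/-- The extension `d_Y` of the domain map `d` to the graph `E_Y`. -/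
def glueD {E0 E1 : Type*} [TopologicalSpace E0] (d : E1 → E0) (Y : Set E0) :
    Glue E1 (d ⁻¹' closure Y) (d ⁻¹' (closure Y \ Y)) → Glue E0 (closure Y) (closure Y \ Y) :=
  Quot.lift
    (Sum.elim (fun e => Glue.inl (d e)) (fun e => Glue.inr ⟨d e.1, e.2⟩))
    (by
      rintro a b ⟨x, hx, (⟨rfl, rfl⟩ | ⟨rfl, rfl⟩)⟩
      · exact Quot.sound ⟨⟨d x.1, x.2⟩, hx, Or.inl ⟨rfl, rfl⟩⟩
      · exact (Quot.sound ⟨⟨d x.1, x.2⟩, hx, Or.inl ⟨rfl, rfl⟩⟩).symm)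

/-- The extension `r_Y` of the range map `r` to the graph `E_Y`. -/
def glueR {E0 E1 : Type*} [TopologicalSpace E0] (d r : E1 → E0) (Y : Set E0) :
    Glue E1 (d ⁻¹' closure Y) (d ⁻¹' (closure Y \ Y)) → Glue E0 (closure Y) (closure Y \ Y) :=
  Quot.lift (Sum.elim (fun e => Glue.inl (r e)) (fun e => Glue.inl (r e.1)))
    (by rintro a b ⟨x, hx, (⟨rfl, rfl⟩ | ⟨rfl, rfl⟩)⟩ <;> rfl)

/-- The projection from the glued space back onto the original space. -/
def glueProj {X : Type*} (S B : Set X) : Glue X S B → X :=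
  Quot.lift (Sum.elim id Subtype.val)
    (by rintro a b ⟨x, hx, (⟨rfl, rfl⟩ | ⟨rfl, rfl⟩)⟩ <;> rfl)

/-- A point of the projective limit `E^i = Ẽ^i \ {∞}`: a compatible thread of points of the
one-point compactifications, not all equal to `∞`. -/
structure LimPt {Λ : Type*} [Preorder Λ] (X : Λ → Type*)
    (m : ∀ ⦃l l' : Λ⦄, l ≤ l' → OnePoint (X l') → OnePoint (X l)) where
  pt : ∀ l, OnePoint (X l)
  compat : ∀ ⦃l l' : Λ⦄ (h : l ≤ l'), m h (pt l') = pt l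
  exists_ne_infty : ∃ l, pt l ≠ ∞

instance {Λ : Type*} [Preorder Λ] (X : Λ → Type*) [∀ l, TopologicalSpace (X l)]
    (m : ∀ ⦃l l' : Λ⦄, l ≤ l' → OnePoint (X l') → OnePoint (X l)) :
    TopologicalSpace (LimPt X m) :=
  TopologicalSpace.induced LimPt.pt inferInstance

/-- Topological freeness: the set of base points of loops without entrances has empty
interior. -/
def IsTopologicallyFree {E0 E1 : Type*} [TopologicalSpace E0] (d r : E1 → E0) : Prop :=
  interior {v : E0 | ∃ (n : ℕ) (hn : 0 < n) (e : Fin n → E1),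
      (∀ k : Fin n, d (e k) = r (e ⟨(k.1 + 1) % n, Nat.mod_lt _ hn⟩)) ∧
      (∀ (k : Fin n) (e' : E1), r e' = r (e k) → e' = e k) ∧
      r (e ⟨0, hn⟩) = v} = ∅

open scoped Classical in
/-- Partial iteration of a partially defined map `σ` with domain `W`:
`sgdsIter σ n x = some y` iff `x ∈ dom (σ^n)` and `σ^n x = y`. -/
noncomputable def sgdsIter {X : Type*} {W : Set X} (σ : ↥W → X) : ℕ → X → Option X
  | 0, x => Option.some x
  | n + 1, x => if h : x ∈ W then sgdsIter σ n (σ ⟨x, h⟩) else none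


section GlueAux

variable {X : Type*} {S B : Set X}

theorem glueRel_symm' {a b : X ⊕ ↥S} (h : glueRel S B a b) : glueRel S B b a := by
  obtain ⟨x, hx, h | h⟩ := h
  · exact ⟨x, hx, Or.inr ⟨h.2, h.1⟩⟩
  · exact ⟨x, hx, Or.inl ⟨h.2, h.1⟩⟩

theorem eqvGen_glueRel {a b : X ⊕ ↥S} (h : Relation.EqvGen (glueRel S B) a b) :
    a = b ∨ glueRel S B a b := by
  induction h with
  | rel a b h => exact Or.inr h
  | refl a => exact Or.inl rfl
  | symm a b _ ih =>
    rcases ih with rfl | h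
    · exact Or.inl rfl
    · exact Or.inr (glueRel_symm' h)
  | trans a b c _ _ ih₁ ih₂ =>
    rcases ih₁ with rfl | h₁
    · exact ih₂
    rcases ih₂ with rfl | h₂
    · exact Or.inr h₁
    obtain ⟨x, hx, ⟨rfl, rfl⟩ | ⟨rfl, rfl⟩⟩ := h₁ <;>
      obtain ⟨x', hx', ⟨h₃, rfl⟩ | ⟨h₃, rfl⟩⟩ := h₂
    · exact absurd h₃ (by simp)
    · obtain rfl : x = x' := by simpa using h₃
      exact Or.inl rfl
    · obtain rfl : x = x' := by exact Subtype.ext (by simpa using h₃)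
      exact Or.inl rfl
    · exact absurd h₃ (by simp)

theorem glue_mk_eq_mk {a b : X ⊕ ↥S} :
    (Quot.mk (glueRel S B) a = Quot.mk (glueRel S B) b) ↔ a = b ∨ glueRel S B a b := by
  rw [Quot.eq]
  constructor
  · exact eqvGen_glueRel
  · rintro (rfl | h)
    · exact Relation.EqvGen.refl _
    · exact Relation.EqvGen.rel _ _ h

theorem glue_inl_eq_inr {x : X} {y : ↥S} :
    (Glue.inl x : Glue X S B) = Glue.inr y ↔ x = ↑y ∧ (y : X) ∈ B := by
  rw [show ((Glue.inl x : Glue X S B) = Glue.inr y) ↔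
      (Sum.inl x : X ⊕ ↥S) = Sum.inr y ∨ glueRel S B (Sum.inl x) (Sum.inr y) from glue_mk_eq_mk]
  constructor
  · rintro (h | ⟨z, hz, ⟨h1, h2⟩ | ⟨h1, h2⟩⟩)
    · exact absurd h (by simp)
    · obtain rfl : y = z := by simpa using h2
      exact ⟨by simpa using h1, hz⟩
    · exact absurd h1 (by simp)
  · rintro ⟨rfl, hB⟩
    exact Or.inr ⟨y, hB, Or.inl ⟨rfl, rfl⟩⟩

theorem glueProj_isProperMap {X : Type*} [TopologicalSpace X] [T2Space X]
    [LocallyCompactSpace X] {S B : Set X} (hS : IsClosed S) :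
    IsProperMap (glueProj S B) := by
  have hcont : Continuous (glueProj S B) :=
    continuous_quot_lift _ (continuous_id.sumElim continuous_subtype_val)
  rw [isProperMap_iff_isCompact_preimage]
  refine ⟨hcont, fun K hK => ?_⟩
  have hset : glueProj S B ⁻¹' K =
      Quot.mk _ '' (Sum.inl '' K ∪ Sum.inr '' ((Subtype.val : ↥S → X) ⁻¹' K)) := by
    ext q
    constructor
    · intro hq
      obtain ⟨a, rfl⟩ := Quot.exists_rep q
      cases a with
      | inl x => exact ⟨Sum.inl x, Or.inl ⟨x, hq, rfl⟩, rfl⟩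
      | inr y => exact ⟨Sum.inr y, Or.inr ⟨y, hq, rfl⟩, rfl⟩
    · rintro ⟨b, hb | hb, rfl⟩
      · obtain ⟨x, hx, rfl⟩ := hb; exact hx
      · obtain ⟨y, hy, rfl⟩ := hb; exact hy
  rw [hset]
  refine IsCompact.image ?_ continuous_quot_mk
  exact (hK.image continuous_inl).union
    ((hS.isClosedEmbedding_subtypeVal.isCompact_preimage hK).image continuous_inr)

theorem isProperMap_continuous_onePoint_map {X Y' : Type*} [TopologicalSpace X]
    [TopologicalSpace Y'] {f : X → Y'} (hf : IsProperMap f) :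
    Continuous (OnePoint.map f) := by
  refine OnePoint.continuous_map hf.continuous ?_
  rw [Filter.hasBasis_coclosedCompact.tendsto_right_iff]
  rintro s ⟨hs_closed, hs_compact⟩
  have hmem : (f ⁻¹' s)ᶜ ∈ Filter.coclosedCompact X :=
    (hf.isCompact_preimage hs_compact).compl_mem_coclosedCompact_of_isClosed
      (hs_closed.preimage hf.continuous)
  exact hmem

variable {E0 E1 : Type*} [TopologicalSpace E0] (d : E1 → E0) (Y : Set E0)

theorem glueD_proj_injective
    {e₁ e₂ : Glue E1 (d ⁻¹' closure Y) (d ⁻¹' (closure Y \ Y))}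
    (hp : glueProj _ _ e₁ = glueProj _ _ e₂) (hD : glueD d Y e₁ = glueD d Y e₂) :
    e₁ = e₂ := by
  obtain ⟨a, rfl⟩ := Quot.exists_rep e₁
  obtain ⟨b, rfl⟩ := Quot.exists_rep e₂
  cases a with
  | inl x =>
    cases b with
    | inl x' =>
      have hx : x = x' := hp
      rw [hx]
    | inr y =>
      have hx : x = ↑y := hp
      have hB : (y : E1) ∈ d ⁻¹' (closure Y \ Y) := (glue_inl_eq_inr.mp hD).2
      exact Quot.sound ⟨y, hB, Or.inl ⟨by rw [hx], rfl⟩⟩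
  | inr y =>
    cases b with
    | inl x' =>
      have hx : (y : E1) = x' := hp
      have hB : (y : E1) ∈ d ⁻¹' (closure Y \ Y) := (glue_inl_eq_inr.mp hD.symm).2
      exact (Quot.sound ⟨y, hB, Or.inl ⟨by rw [hx], rfl⟩⟩).symm
    | inr y' =>
      have hx : y = y' := Subtype.ext hp
      rw [hx]

theorem glueProj_glueD (e : Glue E1 (d ⁻¹' closure Y) (d ⁻¹' (closure Y \ Y))) :
    glueProj _ _ (glueD d Y e) = d (glueProj _ _ e) := by
  obtain ⟨a, rfl⟩ := Quot.exists_rep e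
  cases a with
  | inl x => rfl
  | inr y => rfl

theorem glueProj_glueR (r : E1 → E0)
    (e : Glue E1 (d ⁻¹' closure Y) (d ⁻¹' (closure Y \ Y))) :
    glueProj _ _ (glueR d r Y e) = r (glueProj _ _ e) := by
  obtain ⟨a, rfl⟩ := Quot.exists_rep e
  cases a with
  | inl x => rfl
  | inr y => rfl

end GlueAux

/-- For a topological graph `E` and a closed subset `Y` of `E⁰_rg`, the
natural projections `m_Y⁰ : E_Y⁰ → E⁰` and `m_Y¹ : E_Y¹ → E¹` are proper continuous
surjections, and their extensions to the one-point compactifications (sending `∞` to `∞`)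
form a factor map from `E_Y` to `E`. -/
theorem statement7
    {E0 E1 : Type*} [TopologicalSpace E0] [TopologicalSpace E1]
    [T2Space E0] [T2Space E1] [LocallyCompactSpace E0] [LocallyCompactSpace E1]
    (d r : E1 → E0) (hd : IsLocalHomeomorph d) (hr : Continuous r)
    (Y : Set E0) (hY : Y ⊆ graphRg r) (hYc : closure Y ∩ graphRg r = Y) :
    IsProperMap (glueProj (closure Y) (closure Y \ Y)) ∧
      Function.Surjective (glueProj (closure Y) (closure Y \ Y)) ∧
      IsProperMap (glueProj (d ⁻¹' closure Y) (d ⁻¹' (closure Y \ Y))) ∧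
      Function.Surjective (glueProj (d ⁻¹' closure Y) (d ⁻¹' (closure Y \ Y))) ∧
      IsFactorMap d r (glueD d Y) (glueR d r Y)
        (OnePoint.map (glueProj (closure Y) (closure Y \ Y)))
        (OnePoint.map (glueProj (d ⁻¹' closure Y) (d ⁻¹' (closure Y \ Y)))) := by
  have hS1 : IsClosed (d ⁻¹' closure Y) := isClosed_closure.preimage hd.continuous
  have hp0 : IsProperMap (glueProj (closure Y) (closure Y \ Y)) :=
    glueProj_isProperMap isClosed_closure
  have hp1 : IsProperMap (glueProj (d ⁻¹' closure Y) (d ⁻¹' (closure Y \ Y))) :=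
    glueProj_isProperMap hS1
  refine ⟨hp0, fun x => ⟨Glue.inl x, rfl⟩, hp1, fun e => ⟨Glue.inl e, rfl⟩, ?_⟩
  refine ⟨isProperMap_continuous_onePoint_map hp0,
          isProperMap_continuous_onePoint_map hp1, rfl, rfl, ?_, ?_⟩
  · intro e e' h
    rw [OnePoint.map_some, OnePoint.coe_eq_coe] at h
    subst h
    constructor
    · rw [OnePoint.map_some, OnePoint.coe_eq_coe]
      exact (glueProj_glueR d Y r e).symm
    · rw [OnePoint.map_some, OnePoint.coe_eq_coe]
      exact (glueProj_glueD d Y e).symm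
  · intro e' v h
    rw [OnePoint.map_some, OnePoint.coe_eq_coe] at h
    have key : ∃ c : Glue E1 (d ⁻¹' closure Y) (d ⁻¹' (closure Y \ Y)),
        glueProj _ _ c = e' ∧ glueD d Y c = v := by
      obtain ⟨a, rfl⟩ := Quot.exists_rep v
      cases a with
      | inl x =>
        have hx : d e' = x := h
        exact ⟨Glue.inl e', rfl, congrArg Glue.inl hx⟩
      | inr y =>
        have hx : d e' = ↑y := h
        have he : e' ∈ d ⁻¹' closure Y := by
          show d e' ∈ closure Y; rw [hx]; exact y.2
        refine ⟨Glue.inr ⟨e', he⟩, rfl, ?_⟩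
        show Glue.inr (⟨d e', he⟩ : ↥(closure Y)) = Glue.inr y
        exact congrArg Glue.inr (Subtype.ext hx)
    obtain ⟨c, hc1, hc2⟩ := key
    refine ⟨c, ⟨by rw [OnePoint.map_some, hc1], hc2⟩, ?_⟩
    rintro e₂ ⟨h1, h2⟩
    rw [OnePoint.map_some, OnePoint.coe_eq_coe] at h1
    exact glueD_proj_injective d Y (h1.trans hc1.symm) (h2.trans hc2.symm)

end TopGraphAux
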